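/- In the two-locus Moran model with generator G, define the carré du champ Γ(f,g)(z) = G(fg)(z) − f(z)·G(g)(z) − g(z)·G(f)(z), and write x_i(z) = z_{i·}/N, y_j(z) = z_{·j}/N, d_{ij}(z) = z_{ij}/N − x_i(z) y_j(z), and f_{ij}(z) = d_{ij}(z). Then there exists a constant C, depending only on K and L, such that for all N ≥ 1, all z ∈ ℕ^{K×L} with Σ_{ij} z_{ij} = N, and all (i,j), (k,l) ∈ [K]×[L]: |Γ(f_{ij}, f_{kl})(z) − S_{ij,kl}(z)| ≤ C(1 + θ_A + θ_B + ρ)/N, where S_{ij,kl}(z) = x_i y_j (δ_{ik} − x_k)(δ_{jl} − y_l) + d_{kj} x_i y_l + d_{il} x_k y_j + d_{ij}(x_k y_l − δ_{ik} y_l − δ_{jl} x_k) + d_{kl}(x_i y_j − δ_{ik} y_j − δ_{jl} x_i) + d_{ij}(δ_{ik} δ_{jl} − d_{kl}) (all evaluated at z). -/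

import Mathlib

open scoped BigOperators

/-- Transition rate of the two-locus Moran model: the rate at which a haplotype
`(i,j)` dies and is replaced by a haplotype `(k,l)` when the configuration is `z`. -/
noncomputable def moranRate (N K L : ℕ) (θA θB ρ : ℝ)
    (PA : Fin K → Fin K → ℝ) (PB : Fin L → Fin L → ℝ)
    (z : Fin K → Fin L → ℕ) (i : Fin K) (j : Fin L) (k : Fin K) (l : Fin L) : ℝ :=
  ((z i j : ℝ) / N) *
    (((N : ℝ) ^ 2 / 2) * ((z k l : ℝ) / N)
      + (N : ℝ) * (θA / 2 * PA i k * (if j = l then 1 else 0)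
          + θB / 2 * PB j l * (if i = k then 1 else 0)
          + ρ / 2 * ((∑ l', (z k l' : ℝ)) / N) * ((∑ k', (z k' l : ℝ)) / N)))

/-- The configuration `z − e_{ij} + e_{kl}`. -/
def moranUpdate {K L : ℕ} (z : Fin K → Fin L → ℕ)
    (i : Fin K) (j : Fin L) (k : Fin K) (l : Fin L) : Fin K → Fin L → ℕ :=
  fun i' j' => z i' j' - (if i' = i ∧ j' = j then 1 else 0)
    + (if i' = k ∧ j' = l then 1 else 0)

/-- Generator of the two-locus Moran model acting on `f : ℕ^{K×L} → ℝ`. -/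
noncomputable def moranGen (N K L : ℕ) (θA θB ρ : ℝ)
    (PA : Fin K → Fin K → ℝ) (PB : Fin L → Fin L → ℝ)
    (f : (Fin K → Fin L → ℕ) → ℝ) (z : Fin K → Fin L → ℕ) : ℝ :=
  ∑ i, ∑ j, ∑ k, ∑ l,
    moranRate N K L θA θB ρ PA PB z i j k l * (f (moranUpdate z i j k l) - f z)

/-- Carré du champ operator of the Moran generator:
`Γ(f,g) = G(fg) − f·G(g) − g·G(f)`. -/
noncomputable def moranCarre (N K L : ℕ) (θA θB ρ : ℝ)
    (PA : Fin K → Fin K → ℝ) (PB : Fin L → Fin L → ℝ)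
    (f g : (Fin K → Fin L → ℕ) → ℝ) (z : Fin K → Fin L → ℕ) : ℝ :=
  moranGen N K L θA θB ρ PA PB (fun z' => f z' * g z') z
    - f z * moranGen N K L θA θB ρ PA PB g z
    - g z * moranGen N K L θA θB ρ PA PB f z

/-- The marginal allele frequency `x_u(z) = z_{u·}/N`. -/
noncomputable def moranX (N : ℕ) {K L : ℕ} (z : Fin K → Fin L → ℕ) (u : Fin K) : ℝ :=
  (∑ l, (z u l : ℝ)) / N

/-- The marginal allele frequency `y_v(z) = z_{·v}/N`. -/
noncomputable def moranY (N : ℕ) {K L : ℕ} (z : Fin K → Fin L → ℕ) (v : Fin L) : ℝ :=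
  (∑ k, (z k v : ℝ)) / N

/-- The linkage-disequilibrium coordinate `d_{uv}(z)`. -/
noncomputable def moranLD (N : ℕ) {K L : ℕ} (z : Fin K → Fin L → ℕ)
    (u : Fin K) (v : Fin L) : ℝ :=
  (z u v : ℝ) / N - moranX N z u * moranY N z v

/-- The limiting diffusion coefficient `S_{ij,kl}` of the pair of
linkage-disequilibrium coordinates `(d_{ij}, d_{kl})`. -/
noncomputable def moranSDD (N : ℕ) {K L : ℕ} (z : Fin K → Fin L → ℕ)
    (i k : Fin K) (j l : Fin L) : ℝ :=
  moranX N z i * moranY N z j * ((if i = k then 1 else 0) - moranX N z k) *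
      ((if j = l then 1 else 0) - moranY N z l)
    + moranLD N z k j * moranX N z i * moranY N z l
    + moranLD N z i l * moranX N z k * moranY N z j
    + moranLD N z i j * (moranX N z k * moranY N z l
        - (if i = k then 1 else 0) * moranY N z l
        - (if j = l then 1 else 0) * moranX N z k)
    + moranLD N z k l * (moranX N z i * moranY N z j
        - (if i = k then 1 else 0) * moranY N z j
        - (if j = l then 1 else 0) * moranX N z i)
    + moranLD N z i j * ((if i = k then 1 else 0) * (if j = l then 1 else 0)
        - moranLD N z k l)

section Work
variable (N K L : ℕ) (θA θB ρ : ℝ) (PA : Fin K → Fin K → ℝ) (PB : Fin L → Fin L → ℝ)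

lemma carre_eq (f g : (Fin K → Fin L → ℕ) → ℝ) (z : Fin K → Fin L → ℕ) :
    moranCarre N K L θA θB ρ PA PB f g z
      = ∑ a, ∑ b, ∑ c, ∑ d, moranRate N K L θA θB ρ PA PB z a b c d *
          ((f (moranUpdate z a b c d) - f z) * (g (moranUpdate z a b c d) - g z)) := by
  simp only [moranCarre, moranGen, Finset.mul_sum, ← Finset.sum_sub_distrib]
  refine Finset.sum_congr rfl fun a _ => Finset.sum_congr rfl fun b _ =>
    Finset.sum_congr rfl fun c _ => Finset.sum_congr rfl fun d _ => ?_
  ring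

end Work
section Work2
variable {K L : ℕ}

lemma upd_cast (z : Fin K → Fin L → ℕ) (a : Fin K) (b : Fin L) (c : Fin K) (d : Fin L)
    (hab : 1 ≤ z a b) (u : Fin K) (v : Fin L) :
    ((moranUpdate z a b c d u v : ℕ) : ℝ)
      = (z u v : ℝ) - (if u = a then 1 else 0) * (if v = b then 1 else 0)
          + (if u = c then 1 else 0) * (if v = d then 1 else 0) := by
  have hmle : (if u = a then 1 else 0) * (if v = b then 1 else 0) ≤ z u v := by
    split_ifs with h1 h2
    · subst h1; subst h2; simpa using hab
    all_goals simp
  have h : moranUpdate z a b c d u v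
      = z u v - (if u = a then 1 else 0) * (if v = b then 1 else 0)
        + (if u = c then 1 else 0) * (if v = d then 1 else 0) := by
    unfold moranUpdate
    congr 1
    · congr 1
      by_cases h1 : u = a <;> by_cases h2 : v = b <;> simp [h1, h2]
    · by_cases h1 : u = c <;> by_cases h2 : v = d <;> simp [h1, h2]
  rw [h]
  push_cast [Nat.cast_sub hmle, apply_ite (Nat.cast : ℕ → ℝ)]
  ring

end Work2
section Work3
variable {K L : ℕ}

/-- `g_{ij}(c,d)` building block of the LD increment. -/
noncomputable def moranG (N : ℕ) (z : Fin K → Fin L → ℕ) (i : Fin K) (j : Fin L)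
    (c : Fin K) (d : Fin L) : ℝ :=
  (if i = c then 1 else 0) * (if j = d then 1 else 0)
    - moranX N z i * (if j = d then 1 else 0)
    - moranY N z j * (if i = c then 1 else 0)

lemma updX (N : ℕ) (z : Fin K → Fin L → ℕ) (a : Fin K) (b : Fin L) (c : Fin K) (d : Fin L)
    (hab : 1 ≤ z a b) (u : Fin K) :
    moranX N (moranUpdate z a b c d) u
      = moranX N z u + ((if u = c then 1 else 0) - (if u = a then 1 else 0)) / N := by
  unfold moranX
  rw [Finset.sum_congr rfl fun v _ => upd_cast z a b c d hab u v]
  rw [Finset.sum_add_distrib, Finset.sum_sub_distrib]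
  simp only [← Finset.mul_sum]
  rw [Finset.sum_ite_eq' Finset.univ b fun _ => (1:ℝ)]
  rw [Finset.sum_ite_eq' Finset.univ d fun _ => (1:ℝ)]
  simp only [Finset.mem_univ, if_true, mul_one]
  ring

lemma updY (N : ℕ) (z : Fin K → Fin L → ℕ) (a : Fin K) (b : Fin L) (c : Fin K) (d : Fin L)
    (hab : 1 ≤ z a b) (v : Fin L) :
    moranY N (moranUpdate z a b c d) v
      = moranY N z v + ((if v = d then 1 else 0) - (if v = b then 1 else 0)) / N := by
  unfold moranY
  rw [Finset.sum_congr rfl fun u _ => upd_cast z a b c d hab u v]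
  rw [Finset.sum_add_distrib, Finset.sum_sub_distrib]
  simp only [← Finset.sum_mul]
  rw [Finset.sum_ite_eq' Finset.univ a fun _ => (1:ℝ)]
  rw [Finset.sum_ite_eq' Finset.univ c fun _ => (1:ℝ)]
  simp only [Finset.mem_univ, if_true, one_mul]
  ring

lemma updLD (N : ℕ) (hN : 1 ≤ N) (z : Fin K → Fin L → ℕ)
    (a : Fin K) (b : Fin L) (c : Fin K) (d : Fin L)
    (hab : 1 ≤ z a b) (i : Fin K) (j : Fin L) :
    moranLD N (moranUpdate z a b c d) i j - moranLD N z i j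
      = ((moranG N z i j c d - moranG N z i j a b)
          - ((if i = c then 1 else 0) - (if i = a then 1 else 0))
            * ((if j = d then 1 else 0) - (if j = b then 1 else 0)) / N) / N := by
  have hN0 : (N : ℝ) ≠ 0 := by positivity
  unfold moranLD
  rw [upd_cast z a b c d hab i j, updX N z a b c d hab i, updY N z a b c d hab j]
  unfold moranG
  field_simp
  split_ifs <;> ring

end Work3
section Work4
variable {K L : ℕ}

noncomputable def maskP (N : ℕ) (z : Fin K → Fin L → ℕ) (u : Fin K) (v : Fin L)
    (c : Fin K) (d : Fin L) : ℝ :=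
  (if u = c then 1 else 0) * ((if v = d then 1 else 0) * ((z c d : ℝ) / N))

noncomputable def maskR (N : ℕ) (z : Fin K → Fin L → ℕ) (u : Fin K)
    (c : Fin K) (d : Fin L) : ℝ :=
  (if u = c then 1 else 0) * ((z c d : ℝ) / N)

noncomputable def maskC (N : ℕ) (z : Fin K → Fin L → ℕ) (v : Fin L)
    (c : Fin K) (d : Fin L) : ℝ :=
  (if v = d then 1 else 0) * ((z c d : ℝ) / N)

lemma sum_maskP (N : ℕ) (z : Fin K → Fin L → ℕ) (u : Fin K) (v : Fin L) :
    ∑ c, ∑ d, maskP N z u v c d = (z u v : ℝ) / N := by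
  simp [maskP, ite_mul, zero_mul, one_mul, Finset.sum_ite_eq]

lemma sum_maskR (N : ℕ) (z : Fin K → Fin L → ℕ) (u : Fin K) :
    ∑ c, ∑ d, maskR N z u c d = moranX N z u := by
  simp [maskR, ite_mul, zero_mul, one_mul, Finset.sum_ite_eq, moranX, Finset.sum_div]

lemma sum_maskC (N : ℕ) (z : Fin K → Fin L → ℕ) (v : Fin L) :
    ∑ c, ∑ d, maskC N z v c d = moranY N z v := by
  rw [Finset.sum_comm]
  simp [maskC, ite_mul, zero_mul, one_mul, Finset.sum_ite_eq, moranY, Finset.sum_div]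

end Work4
section Work5
variable {K L : ℕ}

lemma sum_Eg (N : ℕ) (z : Fin K → Fin L → ℕ) (i : Fin K) (j : Fin L) :
    ∑ c, ∑ d, ((z c d : ℝ) / N) * moranG N z i j c d
      = (z i j : ℝ) / N - 2 * (moranX N z i * moranY N z j) := by
  have hexp : ∀ (c : Fin K) (d : Fin L), ((z c d : ℝ) / N) * moranG N z i j c d
      = maskP N z i j c d - moranX N z i * maskC N z j c d
        - moranY N z j * maskR N z i c d := by
    intro c d; unfold moranG maskP maskC maskR; ring
  rw [Finset.sum_congr rfl fun c _ => Finset.sum_congr rfl fun d _ => hexp c d]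
  simp only [Finset.sum_sub_distrib, ← Finset.mul_sum, sum_maskP, sum_maskC, sum_maskR]
  ring

lemma sum_Egg_nene (N : ℕ) (z : Fin K → Fin L → ℕ) (i k : Fin K) (j l : Fin L)
    (hik : i ≠ k) (hjl : j ≠ l) :
    ∑ c, ∑ d, ((z c d : ℝ) / N) * (moranG N z i j c d * moranG N z k l c d)
      = moranX N z i * moranY N z l * ((z k j : ℝ) / N)
        + moranY N z j * moranX N z k * ((z i l : ℝ) / N) := by
  have hexp : ∀ (c : Fin K) (d : Fin L),
      ((z c d : ℝ) / N) * (moranG N z i j c d * moranG N z k l c d)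
      = moranX N z i * moranY N z l * maskP N z k j c d
        + moranY N z j * moranX N z k * maskP N z i l c d := by
    intro c d; unfold moranG maskP
    by_cases h1 : i = c <;> by_cases h2 : k = c <;> by_cases h3 : j = d <;>
      by_cases h4 : l = d <;>
      first
        | exact absurd (h1.trans h2.symm) hik
        | exact absurd (h3.trans h4.symm) hjl
        | (simp [h1, h2, h3, h4]; try ring)
  rw [Finset.sum_congr rfl fun c _ => Finset.sum_congr rfl fun d _ => hexp c d]
  simp only [Finset.sum_add_distrib, ← Finset.mul_sum, sum_maskP]

lemma sum_Egg_eqne (N : ℕ) (z : Fin K → Fin L → ℕ) (i : Fin K) (j l : Fin L)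
    (hjl : j ≠ l) :
    ∑ c, ∑ d, ((z c d : ℝ) / N) * (moranG N z i j c d * moranG N z i l c d)
      = (moranX N z i * moranY N z l - moranY N z l) * ((z i j : ℝ) / N)
        + (moranX N z i * moranY N z j - moranY N z j) * ((z i l : ℝ) / N)
        + moranY N z j * moranY N z l * moranX N z i := by
  have hexp : ∀ (c : Fin K) (d : Fin L),
      ((z c d : ℝ) / N) * (moranG N z i j c d * moranG N z i l c d)
      = (moranX N z i * moranY N z l - moranY N z l) * maskP N z i j c d
        + (moranX N z i * moranY N z j - moranY N z j) * maskP N z i l c d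
        + moranY N z j * moranY N z l * maskR N z i c d := by
    intro c d; unfold moranG maskP maskR
    by_cases h1 : i = c <;> by_cases h3 : j = d <;> by_cases h4 : l = d <;>
      first
        | exact absurd (h3.trans h4.symm) hjl
        | (simp [h1, h3, h4]; try ring)
  rw [Finset.sum_congr rfl fun c _ => Finset.sum_congr rfl fun d _ => hexp c d]
  simp only [Finset.sum_add_distrib, ← Finset.mul_sum, sum_maskP, sum_maskR]

lemma sum_Egg_neeq (N : ℕ) (z : Fin K → Fin L → ℕ) (i k : Fin K) (j : Fin L)
    (hik : i ≠ k) :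
    ∑ c, ∑ d, ((z c d : ℝ) / N) * (moranG N z i j c d * moranG N z k j c d)
      = (moranY N z j * moranX N z k - moranX N z k) * ((z i j : ℝ) / N)
        + (moranX N z i * moranY N z j - moranX N z i) * ((z k j : ℝ) / N)
        + moranX N z i * moranX N z k * moranY N z j := by
  have hexp : ∀ (c : Fin K) (d : Fin L),
      ((z c d : ℝ) / N) * (moranG N z i j c d * moranG N z k j c d)
      = (moranY N z j * moranX N z k - moranX N z k) * maskP N z i j c d
        + (moranX N z i * moranY N z j - moranX N z i) * maskP N z k j c d
        + moranX N z i * moranX N z k * maskC N z j c d := by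
    intro c d; unfold moranG maskP maskC
    by_cases h1 : i = c <;> by_cases h2 : k = c <;> by_cases h3 : j = d <;>
      first
        | exact absurd (h1.trans h2.symm) hik
        | (simp [h1, h2, h3]; try ring)
  rw [Finset.sum_congr rfl fun c _ => Finset.sum_congr rfl fun d _ => hexp c d]
  simp only [Finset.sum_add_distrib, ← Finset.mul_sum, sum_maskP, sum_maskC]

lemma sum_Egg_eqeq (N : ℕ) (z : Fin K → Fin L → ℕ) (i : Fin K) (j : Fin L) :
    ∑ c, ∑ d, ((z c d : ℝ) / N) * (moranG N z i j c d * moranG N z i j c d)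
      = (1 - 2 * moranX N z i - 2 * moranY N z j
          + 2 * (moranX N z i * moranY N z j)) * ((z i j : ℝ) / N)
        + moranX N z i ^ 2 * moranY N z j + moranY N z j ^ 2 * moranX N z i := by
  have hexp : ∀ (c : Fin K) (d : Fin L),
      ((z c d : ℝ) / N) * (moranG N z i j c d * moranG N z i j c d)
      = (1 - 2 * moranX N z i - 2 * moranY N z j
          + 2 * (moranX N z i * moranY N z j)) * maskP N z i j c d
        + moranX N z i ^ 2 * maskC N z j c d
        + moranY N z j ^ 2 * maskR N z i c d := by
    intro c d; unfold moranG maskP maskC maskR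
    by_cases h1 : i = c <;> by_cases h3 : j = d <;> (simp [h1, h3]; try ring)
  rw [Finset.sum_congr rfl fun c _ => Finset.sum_congr rfl fun d _ => hexp c d]
  simp only [Finset.sum_add_distrib, ← Finset.mul_sum, sum_maskP, sum_maskC, sum_maskR]

end Work5
section Work6
variable {K L : ℕ}

lemma sum_factor (F G : Fin K → Fin L → ℝ) :
    ∑ a, ∑ b, ∑ c, ∑ d, F a b * G c d
      = (∑ a, ∑ b, F a b) * (∑ c, ∑ d, G c d) := by
  rw [Finset.sum_mul]
  refine Finset.sum_congr rfl fun a _ => ?_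
  rw [Finset.sum_mul]
  refine Finset.sum_congr rfl fun b _ => ?_
  rw [Finset.mul_sum]
  refine Finset.sum_congr rfl fun c _ => ?_
  rw [Finset.mul_sum]

lemma sum_p_one (N : ℕ) (hN : 1 ≤ N) (z : Fin K → Fin L → ℕ)
    (hz : ∑ i', ∑ j', z i' j' = N) :
    ∑ a, ∑ b, (z a b : ℝ) / N = 1 := by
  have hN0 : (N : ℝ) ≠ 0 := by positivity
  simp only [← Finset.sum_div]
  rw [show (∑ a, ∑ b, (z a b : ℝ)) = (N : ℝ) by push_cast [← hz]; rfl]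
  field_simp

lemma main_sum (N : ℕ) (hN : 1 ≤ N) (z : Fin K → Fin L → ℕ)
    (hz : ∑ i', ∑ j', z i' j' = N) (i k : Fin K) (j l : Fin L) :
    ∑ a, ∑ b, ∑ c, ∑ d, ((z a b : ℝ) / N) * ((z c d : ℝ) / N) * (1 / 2) *
        ((moranG N z i j c d - moranG N z i j a b)
          * (moranG N z k l c d - moranG N z k l a b))
      = moranSDD N z i k j l := by
  have key : ∑ a, ∑ b, ∑ c, ∑ d, ((z a b : ℝ) / N) * ((z c d : ℝ) / N) * (1 / 2) *
        ((moranG N z i j c d - moranG N z i j a b)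
          * (moranG N z k l c d - moranG N z k l a b))
      = (∑ c, ∑ d, ((z c d : ℝ) / N) * (moranG N z i j c d * moranG N z k l c d))
        - (∑ c, ∑ d, ((z c d : ℝ) / N) * moranG N z i j c d)
          * (∑ c, ∑ d, ((z c d : ℝ) / N) * moranG N z k l c d) := by
    have e1 : ∀ (a c : Fin K) (b d : Fin L),
        ((z a b : ℝ) / N) * ((z c d : ℝ) / N) * (1 / 2) *
          ((moranG N z i j c d - moranG N z i j a b)
            * (moranG N z k l c d - moranG N z k l a b))
        = ((1 / 2) * ((z a b : ℝ) / N)) *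
              (((z c d : ℝ) / N) * (moranG N z i j c d * moranG N z k l c d))
          + ((1 / 2) * (((z a b : ℝ) / N) * (moranG N z i j a b * moranG N z k l a b))) *
              ((z c d : ℝ) / N)
          - ((1 / 2) * (((z a b : ℝ) / N) * moranG N z i j a b)) *
              (((z c d : ℝ) / N) * moranG N z k l c d)
          - ((1 / 2) * (((z a b : ℝ) / N) * moranG N z k l a b)) *
              (((z c d : ℝ) / N) * moranG N z i j c d) := by
      intro a c b d; ring
    rw [Finset.sum_congr rfl fun a _ => Finset.sum_congr rfl fun b _ =>
      Finset.sum_congr rfl fun c _ => Finset.sum_congr rfl fun d _ => e1 a c b d]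
    simp only [Finset.sum_add_distrib, Finset.sum_sub_distrib]
    rw [sum_factor, sum_factor, sum_factor, sum_factor]
    simp only [← Finset.mul_sum, sum_p_one N hN z hz, sum_Eg]
    ring
  rw [key, sum_Eg, sum_Eg]
  rcases eq_or_ne i k with rfl | hik <;> rcases eq_or_ne j l with rfl | hjl
  · rw [sum_Egg_eqeq]
    simp only [moranSDD, moranLD, eq_self_iff_true, if_true]
    ring
  · rw [sum_Egg_eqne N z i j l hjl]
    simp only [moranSDD, moranLD, eq_self_iff_true, if_true, if_neg hjl]
    ring
  · rw [sum_Egg_neeq N z i k j hik]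
    simp only [moranSDD, moranLD, eq_self_iff_true, if_true, if_neg hik]
    ring
  · rw [sum_Egg_nene N z i k j l hik hjl]
    simp only [moranSDD, moranLD, if_neg hik, if_neg hjl]
    ring

end Work6
section Work7
variable {K L : ℕ}

lemma abs_mul_le' {x y cx cy : ℝ} (hx : |x| ≤ cx) (hy : |y| ≤ cy) : |x * y| ≤ cx * cy := by
  rw [abs_mul]
  exact mul_le_mul hx hy (abs_nonneg _) ((abs_nonneg x).trans hx)

lemma abs_sub_le'' {x y cx cy : ℝ} (hx : |x| ≤ cx) (hy : |y| ≤ cy) : |x - y| ≤ cx + cy := by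
  have h := abs_add_le x (-y)
  rw [abs_neg] at h
  rw [sub_eq_add_neg]
  exact h.trans (add_le_add hx hy)

lemma abs_add_le'' {x y cx cy : ℝ} (hx : |x| ≤ cx) (hy : |y| ≤ cy) : |x + y| ≤ cx + cy :=
  (abs_add_le x y).trans (add_le_add hx hy)

/-- entries bounded by total -/
lemma z_le_N (N : ℕ) (z : Fin K → Fin L → ℕ) (hz : ∑ i', ∑ j', z i' j' = N)
    (u : Fin K) (v : Fin L) : z u v ≤ N := by
  calc z u v ≤ ∑ v', z u v' := Finset.single_le_sum (fun _ _ => Nat.zero_le _) (Finset.mem_univ v)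
    _ ≤ ∑ u', ∑ v', z u' v' :=
        Finset.single_le_sum (f := fun u' => ∑ v', z u' v') (fun _ _ => Nat.zero_le _)
          (Finset.mem_univ u)
    _ = N := hz

lemma p_bounds (N : ℕ) (hN : 1 ≤ N) (z : Fin K → Fin L → ℕ)
    (hz : ∑ i', ∑ j', z i' j' = N) (u : Fin K) (v : Fin L) :
    0 ≤ (z u v : ℝ) / N ∧ (z u v : ℝ) / N ≤ 1 := by
  have hN0 : (0:ℝ) < N := by positivity
  constructor
  · positivity
  · rw [div_le_one hN0]
    exact_mod_cast z_le_N N z hz u v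

lemma X_bounds (N : ℕ) (hN : 1 ≤ N) (z : Fin K → Fin L → ℕ)
    (hz : ∑ i', ∑ j', z i' j' = N) (u : Fin K) :
    0 ≤ moranX N z u ∧ moranX N z u ≤ 1 := by
  have hN0 : (0:ℝ) < N := by positivity
  unfold moranX
  constructor
  · positivity
  · rw [div_le_one hN0]
    have : ∑ v', z u v' ≤ N := by
      calc ∑ v', z u v' ≤ ∑ u', ∑ v', z u' v' :=
            Finset.single_le_sum (f := fun u' => ∑ v', z u' v') (fun _ _ => Nat.zero_le _)
              (Finset.mem_univ u)
        _ = N := hz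
    exact_mod_cast this

lemma Y_bounds (N : ℕ) (hN : 1 ≤ N) (z : Fin K → Fin L → ℕ)
    (hz : ∑ i', ∑ j', z i' j' = N) (v : Fin L) :
    0 ≤ moranY N z v ∧ moranY N z v ≤ 1 := by
  have hN0 : (0:ℝ) < N := by positivity
  unfold moranY
  constructor
  · positivity
  · rw [div_le_one hN0]
    have : ∑ u', z u' v ≤ N := by
      calc ∑ u', z u' v ≤ ∑ u', ∑ v', z u' v' :=
            Finset.sum_le_sum fun u' _ =>
              Finset.single_le_sum (fun _ _ => Nat.zero_le _) (Finset.mem_univ v)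
        _ = N := hz
    exact_mod_cast this

lemma G_bound (N : ℕ) (hN : 1 ≤ N) (z : Fin K → Fin L → ℕ)
    (hz : ∑ i', ∑ j', z i' j' = N) (i : Fin K) (j : Fin L) (c : Fin K) (d : Fin L) :
    |moranG N z i j c d| ≤ 3 := by
  obtain ⟨hx0, hx1⟩ := X_bounds N hN z hz i
  obtain ⟨hy0, hy1⟩ := Y_bounds N hN z hz j
  unfold moranG
  split_ifs <;> simp only [mul_one, mul_zero, sub_zero, zero_sub, zero_mul] <;>
    rw [abs_le] <;> constructor <;> linarith

end Work7
section Work8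
variable {K L : ℕ}
set_option maxHeartbeats 2000000

lemma key_id (n pab pcd μ Ai Ak Bi Bk : ℝ) (hn : n ≠ 0) :
    (n^2/2 * (pab * pcd) + n * μ) * (((Ai - Bi / n) / n) * ((Ak - Bk / n) / n))
      - pab * pcd * (1/2) * (Ai * Ak)
    = (1/n) * ((1/2) * (pab * pcd) * (-(Ai * Bk) - Ak * Bi + Bi * Bk * (1/n))
        + μ * ((Ai - Bi * (1/n)) * (Ak - Bk * (1/n)))) := by
  field_simp
  ring

lemma Q_bound (n pab pcd μ Ai Ak Bi Bk θs : ℝ) (hn : |1/n| ≤ 1)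
    (hp : |pab| ≤ 1) (hq : |pcd| ≤ 1) (hμ : |μ| ≤ θs/2) (hθs : 0 ≤ θs)
    (hAi : |Ai| ≤ 6) (hAk : |Ak| ≤ 6) (hBi : |Bi| ≤ 1) (hBk : |Bk| ≤ 1) :
    |(1/2) * (pab * pcd) * (-(Ai * Bk) - Ak * Bi + Bi * Bk * (1/n))
        + μ * ((Ai - Bi * (1/n)) * (Ak - Bk * (1/n)))| ≤ 50 * (1 + θs) := by
  have hpp : |pab * pcd| ≤ 1 := by have := abs_mul_le' hp hq; linarith
  have e1 : |Ai * Bk| ≤ 6 := by have := abs_mul_le' hAi hBk; linarith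
  have e2 : |Ak * Bi| ≤ 6 := by have := abs_mul_le' hAk hBi; linarith
  have e3 : |Bi * Bk * (1/n)| ≤ 1 := by
    have := abs_mul_le' (abs_mul_le' hBi hBk) hn; linarith
  have e4 : |-(Ai * Bk)| ≤ 6 := by rw [abs_neg]; exact e1
  have hR : |-(Ai * Bk) - Ak * Bi + Bi * Bk * (1/n)| ≤ 13 := by
    have := abs_add_le'' (abs_sub_le'' e4 e2) e3; linarith
  have f1 : |Ai - Bi * (1/n)| ≤ 7 := by
    have := abs_sub_le'' hAi (abs_mul_le' hBi hn); linarith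
  have f2 : |Ak - Bk * (1/n)| ≤ 7 := by
    have := abs_sub_le'' hAk (abs_mul_le' hBk hn); linarith
  have hS : |(Ai - Bi * (1/n)) * (Ak - Bk * (1/n))| ≤ 49 := by
    have := abs_mul_le' f1 f2; linarith
  have hhalf : |(1:ℝ)/2| ≤ 1/2 := by rw [abs_of_nonneg (by norm_num : (0:ℝ) ≤ 1/2)]
  have hterm1 : |(1/2) * (pab * pcd) * (-(Ai * Bk) - Ak * Bi + Bi * Bk * (1/n))| ≤ 13/2 := by
    have := abs_mul_le' (abs_mul_le' hhalf hpp) hR; linarith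
  have hterm2 : |μ * ((Ai - Bi * (1/n)) * (Ak - Bk * (1/n)))| ≤ θs/2 * 49 :=
    abs_mul_le' hμ hS
  have := abs_add_le'' hterm1 hterm2
  linarith

lemma term_bound (N : ℕ) (hN : 1 ≤ N) (θA θB ρ : ℝ) (hθA : 0 ≤ θA) (hθB : 0 ≤ θB)
    (hρ : 0 ≤ ρ) (PA : Fin K → Fin K → ℝ) (PB : Fin L → Fin L → ℝ)
    (hPA : (∀ i k, 0 ≤ PA i k) ∧ ∀ i, ∑ k, PA i k = 1)
    (hPB : (∀ j l, 0 ≤ PB j l) ∧ ∀ j, ∑ l, PB j l = 1)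
    (z : Fin K → Fin L → ℕ) (hz : ∑ i', ∑ j', z i' j' = N)
    (i k a c : Fin K) (j l b d : Fin L) :
    |moranRate N K L θA θB ρ PA PB z a b c d *
        ((moranLD N (moranUpdate z a b c d) i j - moranLD N z i j) *
          (moranLD N (moranUpdate z a b c d) k l - moranLD N z k l))
      - ((z a b : ℝ) / N) * ((z c d : ℝ) / N) * (1 / 2) *
          ((moranG N z i j c d - moranG N z i j a b)
            * (moranG N z k l c d - moranG N z k l a b))|
      ≤ 50 * (1 + θA + θB + ρ) / N := by
  have hN0 : (0:ℝ) < N := by positivity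
  have hNne : (N:ℝ) ≠ 0 := ne_of_gt hN0
  rcases Nat.eq_zero_or_pos (z a b) with h0 | hab
  · have hr : moranRate N K L θA θB ρ PA PB z a b c d = 0 := by
      unfold moranRate; rw [h0]; push_cast; ring
    rw [hr, h0]
    push_cast
    rw [zero_mul]
    simp only [zero_div, zero_mul, sub_zero, abs_zero, zero_sub, abs_neg]
    positivity
  · have hΔf := updLD N hN z a b c d hab i j
    have hΔg := updLD N hN z a b c d hab k l
    have hrate : moranRate N K L θA θB ρ PA PB z a b c d
        = (N:ℝ)^2/2 * (((z a b : ℝ)/N) * ((z c d : ℝ)/N))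
          + (N:ℝ) * (((z a b : ℝ)/N) * (θA/2 * PA a c * (if b = d then 1 else 0)
              + θB/2 * PB b d * (if a = c then 1 else 0)
              + ρ/2 * moranX N z c * moranY N z d)) := by
      unfold moranRate moranX moranY
      ring
    rw [hΔf, hΔg, hrate,
      key_id (N:ℝ) ((z a b : ℝ)/N) ((z c d : ℝ)/N)
        (((z a b : ℝ)/N) * (θA/2 * PA a c * (if b = d then 1 else 0)
          + θB/2 * PB b d * (if a = c then 1 else 0)
          + ρ/2 * moranX N z c * moranY N z d))
        (moranG N z i j c d - moranG N z i j a b)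
        (moranG N z k l c d - moranG N z k l a b)
        (((if i = c then (1:ℝ) else 0) - if i = a then 1 else 0)
          * ((if j = d then (1:ℝ) else 0) - if j = b then 1 else 0))
        (((if k = c then (1:ℝ) else 0) - if k = a then 1 else 0)
          * ((if l = d then (1:ℝ) else 0) - if l = b then 1 else 0)) hNne]
    rw [abs_mul, abs_of_nonneg (by positivity : (0:ℝ) ≤ 1/(N:ℝ))]
    -- component bounds
    obtain ⟨hp0, hp1⟩ := p_bounds N hN z hz a b
    obtain ⟨hq0, hq1⟩ := p_bounds N hN z hz c d
    have hGb := G_bound N hN z hz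
    have hfac : ∀ (P Q : Prop) [Decidable P] [Decidable Q],
        |(if P then (1:ℝ) else 0) - (if Q then (1:ℝ) else 0)| ≤ 1 := by
      intro P Q _ _; split_ifs <;> norm_num
    have hinv : |(1:ℝ)/N| ≤ 1 := by
      rw [abs_of_nonneg (by positivity), div_le_one hN0]
      exact_mod_cast hN
    have hPA1 : PA a c ≤ 1 := by
      calc PA a c ≤ ∑ k', PA a k' :=
            Finset.single_le_sum (fun k' _ => hPA.1 a k') (Finset.mem_univ c)
        _ = 1 := hPA.2 a
    have hPB1 : PB b d ≤ 1 := by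
      calc PB b d ≤ ∑ l', PB b l' :=
            Finset.single_le_sum (fun l' _ => hPB.1 b l') (Finset.mem_univ d)
        _ = 1 := hPB.2 b
    obtain ⟨hxc0, hxc1⟩ := X_bounds N hN z hz c
    obtain ⟨hyd0, hyd1⟩ := Y_bounds N hN z hz d
    have hd1 : (0:ℝ) ≤ (if b = d then (1:ℝ) else 0) ∧ (if b = d then (1:ℝ) else 0) ≤ 1 := by
      split_ifs <;> norm_num
    have hd2 : (0:ℝ) ≤ (if a = c then (1:ℝ) else 0) ∧ (if a = c then (1:ℝ) else 0) ≤ 1 := by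
      split_ifs <;> norm_num
    have h1 : 0 ≤ θA/2 * PA a c * (if b = d then 1 else 0) ∧
        θA/2 * PA a c * (if b = d then 1 else 0) ≤ θA/2 := by
      constructor
      · have := hPA.1 a c; have := hd1.1; positivity
      · have hm : PA a c * (if b = d then 1 else 0) ≤ 1 :=
          mul_le_one₀ hPA1 hd1.1 hd1.2
        nlinarith [hm, hθA]
    have h2 : 0 ≤ θB/2 * PB b d * (if a = c then 1 else 0) ∧
        θB/2 * PB b d * (if a = c then 1 else 0) ≤ θB/2 := by
      constructor
      · have := hPB.1 b d; have := hd2.1; positivity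
      · have hm : PB b d * (if a = c then 1 else 0) ≤ 1 :=
          mul_le_one₀ hPB1 hd2.1 hd2.2
        nlinarith [hm, hθB]
    have h3 : 0 ≤ ρ/2 * moranX N z c * moranY N z d ∧
        ρ/2 * moranX N z c * moranY N z d ≤ ρ/2 := by
      constructor
      · positivity
      · have hm : moranX N z c * moranY N z d ≤ 1 := mul_le_one₀ hxc1 hyd0 hyd1
        nlinarith [hm, hρ]
    have hμb : |((z a b : ℝ)/N) * (θA/2 * PA a c * (if b = d then 1 else 0)
        + θB/2 * PB b d * (if a = c then 1 else 0)
        + ρ/2 * moranX N z c * moranY N z d)| ≤ (θA + θB + ρ)/2 := by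
      rw [abs_mul, abs_of_nonneg hp0,
        abs_of_nonneg (by linarith [h1.1, h2.1, h3.1])]
      have hs : θA/2 * PA a c * (if b = d then 1 else 0)
          + θB/2 * PB b d * (if a = c then 1 else 0)
          + ρ/2 * moranX N z c * moranY N z d ≤ (θA + θB + ρ)/2 := by
        linarith [h1.2, h2.2, h3.2]
      have hs0 : 0 ≤ θA/2 * PA a c * (if b = d then 1 else 0)
          + θB/2 * PB b d * (if a = c then 1 else 0)
          + ρ/2 * moranX N z c * moranY N z d := by
        linarith [h1.1, h2.1, h3.1]
      nlinarith [hp0, hp1]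
    have hq50 := Q_bound (N:ℝ) ((z a b : ℝ)/N) ((z c d : ℝ)/N)
      (((z a b : ℝ)/N) * (θA/2 * PA a c * (if b = d then 1 else 0)
        + θB/2 * PB b d * (if a = c then 1 else 0)
        + ρ/2 * moranX N z c * moranY N z d))
      (moranG N z i j c d - moranG N z i j a b)
      (moranG N z k l c d - moranG N z k l a b)
      (((if i = c then (1:ℝ) else 0) - if i = a then 1 else 0)
        * ((if j = d then (1:ℝ) else 0) - if j = b then 1 else 0))
      (((if k = c then (1:ℝ) else 0) - if k = a then 1 else 0)
        * ((if l = d then (1:ℝ) else 0) - if l = b then 1 else 0))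
      (θA + θB + ρ) hinv
      (by rw [abs_of_nonneg hp0]; exact hp1)
      (by rw [abs_of_nonneg hq0]; exact hq1)
      hμb (by linarith)
      (by have := abs_sub_le'' (hGb i j c d) (hGb i j a b); linarith)
      (by have := abs_sub_le'' (hGb k l c d) (hGb k l a b); linarith)
      (by have := abs_mul_le' (hfac (i = c) (i = a)) (hfac (j = d) (j = b)); linarith)
      (by have := abs_mul_le' (hfac (k = c) (k = a)) (hfac (l = d) (l = b)); linarith)
    calc (1/(N:ℝ)) * _ ≤ (1/(N:ℝ)) * (50 * (1 + (θA + θB + ρ))) :=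
          mul_le_mul_of_nonneg_left hq50 (by positivity)
      _ = 50 * (1 + θA + θB + ρ) / N := by ring

end Work8
/-- The carré du champ of the linkage-disequilibrium coordinates reproduces the
diffusion coefficient `S_{ij,kl}` up to an error of order `(1 + θ_A + θ_B + ρ)/N`,
with constant depending only on `K` and `L`. -/
theorem moranCarre_LD (K L : ℕ) (hK : 1 ≤ K) (hL : 1 ≤ L) :
    ∃ C : ℝ, 0 < C ∧
      ∀ (θA θB ρ : ℝ), 0 ≤ θA → 0 ≤ θB → 0 ≤ ρ →
      ∀ (PA : Fin K → Fin K → ℝ) (PB : Fin L → Fin L → ℝ),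
        ((∀ i k, 0 ≤ PA i k) ∧ ∀ i, ∑ k, PA i k = 1) →
        ((∀ j l, 0 ≤ PB j l) ∧ ∀ j, ∑ l, PB j l = 1) →
      ∀ N : ℕ, 1 ≤ N →
      ∀ z : Fin K → Fin L → ℕ, ∑ i', ∑ j', z i' j' = N →
      ∀ (i k : Fin K) (j l : Fin L),
        |moranCarre N K L θA θB ρ PA PB
              (fun z' => moranLD N z' i j) (fun z' => moranLD N z' k l) z
            - moranSDD N z i k j l|
          ≤ C * (1 + θA + θB + ρ) / N := by
  refine ⟨50 * (K:ℝ)^2 * (L:ℝ)^2, ?_, ?_⟩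
  · have hK0 : (0:ℝ) < K := by exact_mod_cast hK
    have hL0 : (0:ℝ) < L := by exact_mod_cast hL
    positivity
  intro θA θB ρ hθA hθB hρ PA PB hPA hPB N hN z hz i k j l
  have hN0 : (0:ℝ) < N := by positivity
  have hcar := carre_eq N K L θA θB ρ PA PB
    (fun z' => moranLD N z' i j) (fun z' => moranLD N z' k l) z
  rw [hcar, ← main_sum N hN z hz i k j l]
  simp only [← Finset.sum_sub_distrib]
  have h1 : |∑ a, ∑ b, ∑ c, ∑ d,
        (moranRate N K L θA θB ρ PA PB z a b c d *
          ((moranLD N (moranUpdate z a b c d) i j - moranLD N z i j) *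
            (moranLD N (moranUpdate z a b c d) k l - moranLD N z k l))
        - ((z a b : ℝ) / N) * ((z c d : ℝ) / N) * (1 / 2) *
            ((moranG N z i j c d - moranG N z i j a b)
              * (moranG N z k l c d - moranG N z k l a b)))|
      ≤ ∑ a, ∑ b, ∑ c, ∑ d,
        |moranRate N K L θA θB ρ PA PB z a b c d *
          ((moranLD N (moranUpdate z a b c d) i j - moranLD N z i j) *
            (moranLD N (moranUpdate z a b c d) k l - moranLD N z k l))
        - ((z a b : ℝ) / N) * ((z c d : ℝ) / N) * (1 / 2) *
            ((moranG N z i j c d - moranG N z i j a b)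
              * (moranG N z k l c d - moranG N z k l a b))| := by
    refine (Finset.abs_sum_le_sum_abs _ _).trans (Finset.sum_le_sum fun a _ => ?_)
    refine (Finset.abs_sum_le_sum_abs _ _).trans (Finset.sum_le_sum fun b _ => ?_)
    refine (Finset.abs_sum_le_sum_abs _ _).trans (Finset.sum_le_sum fun c _ => ?_)
    exact Finset.abs_sum_le_sum_abs _ _
  refine h1.trans ?_
  have h2 : ∑ a, ∑ b, ∑ c, ∑ d,
        |moranRate N K L θA θB ρ PA PB z a b c d *
          ((moranLD N (moranUpdate z a b c d) i j - moranLD N z i j) *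
            (moranLD N (moranUpdate z a b c d) k l - moranLD N z k l))
        - ((z a b : ℝ) / N) * ((z c d : ℝ) / N) * (1 / 2) *
            ((moranG N z i j c d - moranG N z i j a b)
              * (moranG N z k l c d - moranG N z k l a b))|
      ≤ ∑ _a : Fin K, ∑ _b : Fin L, ∑ _c : Fin K, ∑ _d : Fin L,
          (50 * (1 + θA + θB + ρ) / N) := by
    refine Finset.sum_le_sum fun a _ => Finset.sum_le_sum fun b _ =>
      Finset.sum_le_sum fun c _ => Finset.sum_le_sum fun d _ => ?_
    exact term_bound N hN θA θB ρ hθA hθB hρ PA PB hPA hPB z hz i k a c j l b d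
  refine h2.trans ?_
  rw [Finset.sum_const, Finset.sum_const, Finset.sum_const, Finset.sum_const]
  simp only [Finset.card_univ, Fintype.card_fin, nsmul_eq_mul]
  rw [show (50:ℝ) * (K:ℝ)^2 * (L:ℝ)^2 * (1 + θA + θB + ρ) / N
      = (K:ℝ) * ((L:ℝ) * ((K:ℝ) * ((L:ℝ) * (50 * (1 + θA + θB + ρ) / N)))) by ring]
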